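/- If p and q = p + Δ are both prime with Δ > 0 odd and s₁₀(p·q) = Δ, then p = 2 and q = 7. -/

import Mathlib

lemma pow_bound : ∀ k, 2 ≤ k → 18 * k + 22 < 10 ^ k := by
  intro k hk
  induction k with
  | zero => omega
  | succ n ih =>
    rcases Nat.lt_or_ge n 2 with hn | hn
    · interval_cases n
      · omega
      · norm_num
    · have := ih hn
      have : 10 ^ n ≤ 10 ^ (n + 1) / 10 * 10 := by
        rw [pow_succ]; omega
      calc 18 * (n + 1) + 22 ≤ 10 * (18 * n + 22) := by omega
        _ < 10 * 10 ^ n := by omega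
        _ = 10 ^ (n + 1) := by ring

lemma digit_sum_le (m : ℕ) (hm : m ≠ 0) :
    (Nat.digits 10 m).sum ≤ 9 * (Nat.log 10 m + 1) := by
  have hlen : (Nat.digits 10 m).length = Nat.log 10 m + 1 :=
    Nat.digits_len 10 m (by norm_num) hm
  calc (Nat.digits 10 m).sum ≤ (Nat.digits 10 m).length • 9 :=
        List.sum_le_card_nsmul _ 9 (fun x hx =>
          Nat.lt_succ_iff.mp (Nat.digits_lt_base (by norm_num) hx))
    _ = 9 * (Nat.log 10 m + 1) := by rw [hlen]; simp [Nat.mul_comm]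

theorem sand_prime_odd_delta (p Δ : ℕ) (hp : Nat.Prime p) (hq : Nat.Prime (p + Δ))
    (hΔ : 0 < Δ) (hodd : Odd Δ) (h : (Nat.digits 10 (p * (p + Δ))).sum = Δ) :
    p = 2 ∧ p + Δ = 7 := by
  have hp2 : p = 2 := by
    by_contra hne
    have hop : Odd p := hp.odd_of_ne_two hne
    have hev : Even (p + Δ) := hop.add_odd hodd
    have := (Nat.Prime.even_iff hq).mp hev
    have := hp.two_le
    omega
  subst hp2
  -- bound Δ
  have hbig : Δ < 48 := by
    by_contra hge
    push_neg at hge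
    set m := 2 * (2 + Δ) with hm
    have hm0 : m ≠ 0 := by omega
    have h1 : Δ ≤ 9 * (Nat.log 10 m + 1) := h ▸ digit_sum_le m hm0
    have h2 : 10 ^ 2 ≤ m := by omega
    have hk : 2 ≤ Nat.log 10 m := (Nat.le_log_iff_pow_le (by norm_num) hm0).mpr h2
    have h3 : 10 ^ Nat.log 10 m ≤ m := Nat.pow_log_le_self 10 hm0
    have h4 := pow_bound _ hk
    omega
  refine ⟨rfl, ?_⟩
  interval_cases Δ <;> simp_all
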